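/- Let q = 2^n and let x be transcendental over F_q. Set u = 1/(x^q + x) and v = x^{q+1}/(x^q + x) in F_q(x). Then u^q·v + u·v^q + Tr_{F_q/F_2}(uv) + 1 = 0, where Tr_{F_q/F_2}(T) denotes the polynomial T + T² + ⋯ + T^{2^{n-1}} applied to uv. -/

import Mathlib

private lemma key2 {F : Type*} [Field F] [CharP F 2] (X y z : F) (ht : y + X ≠ 0) (hs : z + y ≠ 0) :
    (1/(z+y))*(y*X/(y+X)) + (1/(y+X))*(z*y/(z+y)) + (y/(z+y) + X/(y+X)) + 1 = 0 := by
  have h2 : (2 : F) = 0 := by exact_mod_cast CharP.cast_eq_zero F 2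
  field_simp
  linear_combination (2*y*X + y*z + y^2 + X*z) * h2

theorem stmt8 (n q : ℕ) (hn : 0 < n) (hq : q = 2 ^ n)
    (u v : RatFunc (GaloisField 2 n))
    (hu : u = 1 / (RatFunc.X ^ q + RatFunc.X))
    (hv : v = RatFunc.X ^ (q + 1) / (RatFunc.X ^ q + RatFunc.X)) :
    u ^ q * v + u * v ^ q + (∑ i ∈ Finset.range n, (u * v) ^ (2 ^ i)) + 1 = 0 := by
  subst hq
  haveI hchar : CharP (RatFunc (GaloisField 2 n)) 2 :=
    charP_of_injective_ringHom (algebraMap (GaloisField 2 n) (RatFunc (GaloisField 2 n))).injective 2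
  haveI : ExpChar (RatFunc (GaloisField 2 n)) 2 := ExpChar.prime Nat.prime_two
  have h2 : (2 : RatFunc (GaloisField 2 n)) = 0 := by
    exact_mod_cast CharP.cast_eq_zero (RatFunc (GaloisField 2 n)) 2
  have hpne : ((Polynomial.X : Polynomial (GaloisField 2 n)) ^ 2 ^ n + Polynomial.X) ≠ 0 := by
    intro h
    have h1 : (2:ℕ) ^ n ≠ 1 := by
      have := Nat.one_lt_two_pow_iff.mpr hn.ne'
      omega
    have h3 := congrArg (fun p => Polynomial.coeff p 1) h
    simp [Polynomial.coeff_X_pow] at h3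
    rw [if_neg (fun hh => h1 hh.symm)] at h3
    simp at h3
  have ht : ((RatFunc.X : RatFunc (GaloisField 2 n)) ^ 2 ^ n + RatFunc.X) ≠ 0 := by
    simpa [map_add, map_pow, RatFunc.algebraMap_X] using RatFunc.algebraMap_ne_zero hpne
  set X : RatFunc (GaloisField 2 n) := RatFunc.X with hX
  set t : RatFunc (GaloisField 2 n) := X ^ 2 ^ n + X with htdef
  set y : RatFunc (GaloisField 2 n) := X ^ 2 ^ n with hy
  set z : RatFunc (GaloisField 2 n) := y ^ 2 ^ n with hz
  have hty : t = y + X := rfl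
  have htq : t ^ 2 ^ n = z + y := by rw [hty, add_pow_expChar_pow]
  have hsne : (z + y) ≠ 0 := htq ▸ pow_ne_zero _ ht
  have hty' : (y + X) ≠ 0 := ht
  set a : RatFunc (GaloisField 2 n) := X / t with ha
  have huv : u * v = a + a ^ 2 := by
    rw [hu, hv, ha]
    field_simp
    rw [hty, pow_succ, ← hy]
    linear_combination (-(X^2)) * h2
  have hsum : ∑ i ∈ Finset.range n, (u * v) ^ 2 ^ i = a ^ 2 ^ n + a := by
    have step : ∀ i ∈ Finset.range n, (u * v) ^ 2 ^ i
        = a ^ 2 ^ (i + 1) - a ^ 2 ^ i := by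
      intro i _
      rw [huv, add_pow_expChar_pow, ← pow_mul, CharTwo.sub_eq_add, add_comm]
      ring_nf
    rw [Finset.sum_congr rfl step, Finset.sum_range_sub (fun i => a ^ 2 ^ i),
      pow_zero, pow_one, CharTwo.sub_eq_add]
  rw [hsum]
  have huq : u ^ 2 ^ n = 1 / (z + y) := by
    rw [hu, div_pow, one_pow, htq]
  have hvy : v = y * X / t := by
    rw [hv, pow_succ, hy]
  have hvq : v ^ 2 ^ n = z * y / (z + y) := by
    rw [hvy, div_pow, mul_pow, htq, ← hz, ← hy]
  have haq : a ^ 2 ^ n = y / (z + y) := by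
    rw [ha, div_pow, htq, ← hy]
  rw [huq, hvq, haq, hu, hvy, hty]
  linear_combination key2 X y z hty' hsne
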